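/- Let k ≥ 1 be an integer and let H* be a k-regular graph on vertex set [n]. Then the number of k-regular spanning subgraphs H of the complete graph on [n] with |E(H) Δ E(H*)| = 2t is at most binom(kn/2, t) · (2t−1)!!, i.e., at most binom(kn/2, t) · (2t)!/(2^t t!). -/

import Mathlib

open Finset Equiv

namespace Stmt2Aux

set_option linter.unusedSectionVars false
set_option maxHeartbeats 1000000

section Sym2Lemmas

variable {V : Type*} [LinearOrder V]


variable {V : Type*} [LinearOrder V]

lemma sym2_inf_mem (e : Sym2 V) : e.inf ∈ e := by
  induction e using Sym2.ind with
  | _ a b =>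
    rw [Sym2.inf_mk, Sym2.mem_iff]
    rcases le_total a b with h | h
    · left; exact inf_eq_left.mpr h
    · right; exact inf_eq_right.mpr h

lemma sym2_sup_mem (e : Sym2 V) : e.sup ∈ e := by
  induction e using Sym2.ind with
  | _ a b =>
    rw [Sym2.sup_mk, Sym2.mem_iff]
    rcases le_total a b with h | h
    · right; exact sup_eq_right.mpr h
    · left; exact sup_eq_left.mpr h

lemma sym2_eq_inf_or_sup {e : Sym2 V} {v : V} (h : v ∈ e) : v = e.inf ∨ v = e.sup := by
  induction e using Sym2.ind with
  | _ a b =>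
    rw [Sym2.mem_iff] at h
    rw [Sym2.inf_mk, Sym2.sup_mk]
    rcases le_total a b with hab | hab <;> rcases h with rfl | rfl <;>
      simp [inf_eq_left.mpr, inf_eq_right.mpr, sup_eq_left.mpr, sup_eq_right.mpr, hab]

lemma sym2_mk_inf_sup (e : Sym2 V) : s(e.inf, e.sup) = e := by
  induction e using Sym2.ind with
  | _ a b =>
    rw [Sym2.inf_mk, Sym2.sup_mk]
    rcases le_total a b with hab | hab
    · rw [inf_eq_left.mpr hab, sup_eq_right.mpr hab]
    · rw [inf_eq_right.mpr hab, sup_eq_left.mpr hab, Sym2.eq_swap]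

lemma sym2_inf_ne_sup {e : Sym2 V} (h : ¬ e.IsDiag) : e.inf ≠ e.sup := by
  induction e using Sym2.ind with
  | _ a b =>
    rw [Sym2.mk_isDiag_iff] at h
    rw [Sym2.inf_mk, Sym2.sup_mk]
    exact ne_of_lt (inf_lt_sup.mpr h)



def hend (s : Finset (Sym2 V)) (p : ↥s × Bool) : V := if p.2 then p.1.1.sup else p.1.1.inf

end Sym2Lemmas

section Fiber

variable {V : Type*} [LinearOrder V] [DecidableEq V]

@[simp] lemma hend_false (s : Finset (Sym2 V)) (e : ↥s) : hend s (e, false) = e.1.inf := rfl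
@[simp] lemma hend_true (s : Finset (Sym2 V)) (e : ↥s) : hend s (e, true) = e.1.sup := rfl

lemma mem_of_hend {s : Finset (Sym2 V)} {v : V} (p : ↥s × Bool) (h : hend s p = v) :
    v ∈ (p.1.1 : Sym2 V) := by
  obtain ⟨e, b⟩ := p
  cases b
  · rw [hend_false] at h; exact h ▸ sym2_inf_mem _
  · rw [hend_true] at h; exact h ▸ sym2_sup_mem _

/-- The fiber of `hend` over `v` is equinumerous with the edges containing `v`. -/
noncomputable def fiberEquiv (s : Finset (Sym2 V)) (hs : ∀ e ∈ s, ¬ e.IsDiag) (v : V) :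
    {p : ↥s × Bool // hend s p = v} ≃ {e : ↥s // v ∈ e.1} where
  toFun x := ⟨x.1.1, mem_of_hend x.1 x.2⟩
  invFun e := ⟨(e.1, decide (e.1.1.sup = v)), by
    rcases e with ⟨e, hv⟩
    by_cases h : e.1.sup = v
    · simp [hend, h]
    · rcases sym2_eq_inf_or_sup hv with h' | h'
      · simp [hend, h, h'.symm]
      · exact absurd h'.symm h⟩
  left_inv := by
    rintro ⟨⟨e, b⟩, h⟩
    apply Subtype.ext
    show (e, decide (e.1.sup = v)) = (e, b)
    rw [Prod.mk.injEq]
    refine ⟨rfl, ?_⟩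
    cases b
    · rw [hend_false] at h
      rw [decide_eq_false]
      intro hc
      exact sym2_inf_ne_sup (hs e.1 e.2) (h.trans hc.symm)
    · rw [hend_true] at h
      simp [h]
  right_inv := by rintro ⟨e, hv⟩; rfl

lemma card_hend_fiber (s : Finset (Sym2 V)) (hs : ∀ e ∈ s, ¬ e.IsDiag) (v : V) :
    Fintype.card {p : ↥s × Bool // hend s p = v} = (s.filter (fun e => v ∈ e)).card := by
  have E : {p : ↥s × Bool // hend s p = v} ≃ ↥(s.filter (fun e => v ∈ e)) :=
    (fiberEquiv s hs v).trans ((subtypeSubtypeEquivSubtypeInter (· ∈ s) (v ∈ ·)).trans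
      (subtypeEquivRight (fun e => (Finset.mem_filter (s := s) (p := fun e => v ∈ e) (a := e)).symm)))
  rw [Fintype.card_congr E, Fintype.card_coe]


/-- Index equivalence for pairs. -/
def E0 (t : ℕ) : Fin t × Fin 2 ≃ Fin (2 * t) :=
  finProdFinEquiv.trans (finCongr (mul_comm t 2))

/-- Block permutations: permute the `t` pairs by `w` and flip pair `i` iff `b i`. -/
def rho (t : ℕ) (b : Fin t → Bool) (w : Equiv.Perm (Fin t)) : Equiv.Perm (Fin (2 * t)) :=
  (E0 t).symm.trans ((Equiv.prodShear w
    (fun i => if b i then Equiv.swap (0 : Fin 2) 1 else Equiv.refl (Fin 2))).trans (E0 t))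

lemma rho_apply (t : ℕ) (b : Fin t → Bool) (w : Equiv.Perm (Fin t)) (p : Fin t × Fin 2) :
    rho t b w (E0 t p) = E0 t (w p.1, (if b p.1 then Equiv.swap (0 : Fin 2) 1 else Equiv.refl (Fin 2)) p.2) := by
  simp [rho, Equiv.prodShear]

lemma rho_injective (t : ℕ) : Function.Injective (fun x : (Fin t → Bool) × Equiv.Perm (Fin t) =>
    rho t x.1 x.2) := by
  rintro ⟨b, w⟩ ⟨b', w'⟩ h
  simp only at h
  have h0 : ∀ i : Fin t, ∀ c : Fin 2, rho t b w (E0 t (i, c)) = rho t b' w' (E0 t (i, c)) := by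
    intro i c; rw [h]
  have key : ∀ i : Fin t, w i = w' i ∧ b i = b' i := by
    intro i
    have := h0 i 0
    rw [rho_apply, rho_apply] at this
    have := (E0 t).injective this
    rw [Prod.mk.injEq] at this
    obtain ⟨h1, h2⟩ := this
    refine ⟨h1, ?_⟩
    by_cases hb : b i <;> by_cases hb' : b' i <;>
      simp [hb, hb', Equiv.swap_apply_left] at h2 ⊢
  rw [Prod.mk.injEq]
  constructor
  · funext i; exact (key i).2
  · ext i : 1; exact (key i).1

variable {n : ℕ}

open scoped Classical in
/-- Decoding map. -/
noncomputable def decode (t : ℕ) (Hstar : SimpleGraph (Fin n)) (A : Finset (Sym2 (Fin n)))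
    (π : Equiv.Perm (Fin (2 * t))) : SimpleGraph (Fin n) :=
  if h : Nonempty ((↥A × Bool) ≃ Fin (2 * t)) then
    SimpleGraph.fromEdgeSet ((Hstar.edgeSet \ ↑A) ∪
      ↑(Finset.image (fun i : Fin t =>
        s(hend A ((Classical.choice h).symm (π (E0 t (i, 0)))),
          hend A ((Classical.choice h).symm (π (E0 t (i, 1)))))) Finset.univ))
  else ⊥


lemma card_edgeFinset_ncard {m : ℕ} (G : SimpleGraph (Fin m)) [Fintype G.edgeSet] :
    G.edgeFinset.card = G.edgeSet.ncard := by
  rw [SimpleGraph.edgeFinset_card, ← Nat.card_eq_fintype_card, Nat.card_coe_set_eq]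

open scoped Classical in
lemma decode_spec {n t k : ℕ} (Hstar H : SimpleGraph (Fin n)) (A₀ : Finset (Sym2 (Fin n)))
    (hA₀ : (↑A₀ : Set (Sym2 (Fin n))) = Hstar.edgeSet \ H.edgeSet)
    (hHs : ∀ v, (Hstar.neighborSet v).ncard = k) (hH : ∀ v, (H.neighborSet v).ncard = k)
    (hsd : (symmDiff H.edgeSet Hstar.edgeSet).ncard = 2 * t) :
    A₀.card = t ∧
    ∃ π : Equiv.Perm (Fin (2 * t)), ∀ (b : Fin t → Bool) (w : Equiv.Perm (Fin t)),
      decode t Hstar A₀ (π * rho t b w) = H := by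
  have hA₀' : A₀ = (Hstar \ H).edgeFinset := Finset.coe_injective (by
    rw [hA₀, SimpleGraph.coe_edgeFinset, SimpleGraph.edgeSet_sdiff])
  subst hA₀'
  set A := (Hstar \ H).edgeFinset with hA
  set B := (H \ Hstar).edgeFinset with hB
  have degH : ∀ v, H.degree v = k := fun v => by
    rw [← SimpleGraph.card_neighborSet_eq_degree, ← Nat.card_eq_fintype_card,
      Nat.card_coe_set_eq, hH v]
  have degHs : ∀ v, Hstar.degree v = k := fun v => by
    rw [← SimpleGraph.card_neighborSet_eq_degree, ← Nat.card_eq_fintype_card,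
      Nat.card_coe_set_eq, hHs v]
  have hdSd : ∀ v, (Hstar \ H).degree v = (H \ Hstar).degree v := by
    intro v
    have h1 : (Hstar \ H).neighborFinset v = Hstar.neighborFinset v \ H.neighborFinset v := by
      ext w; simp [SimpleGraph.mem_neighborFinset, SimpleGraph.sdiff_adj]
    have h2 : (H \ Hstar).neighborFinset v = H.neighborFinset v \ Hstar.neighborFinset v := by
      ext w; simp [SimpleGraph.mem_neighborFinset, SimpleGraph.sdiff_adj]
    have c1 := Finset.card_sdiff_add_card_inter (Hstar.neighborFinset v) (H.neighborFinset v)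
    have c2 := Finset.card_sdiff_add_card_inter (H.neighborFinset v) (Hstar.neighborFinset v)
    rw [Finset.inter_comm] at c2
    have e1 : (Hstar.neighborFinset v).card = k := degHs v
    have e2 : (H.neighborFinset v).card = k := degH v
    rw [SimpleGraph.degree, SimpleGraph.degree, h1, h2]
    omega
  have hAB : A.card = B.card := by
    have s1 := SimpleGraph.sum_degrees_eq_twice_card_edges (Hstar \ H)
    have s2 := SimpleGraph.sum_degrees_eq_twice_card_edges (H \ Hstar)
    rw [card_edgeFinset_ncard] at s1 s2
    rw [Finset.sum_congr rfl (fun v _ => hdSd v), s2] at s1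
    rw [hA, hB, card_edgeFinset_ncard, card_edgeFinset_ncard]
    omega
  have hsum : B.card + A.card = 2 * t := by
    have hd : Disjoint (H.edgeSet \ Hstar.edgeSet) (Hstar.edgeSet \ H.edgeSet) :=
      disjoint_sdiff_sdiff
    rw [Set.symmDiff_def] at hsd
    rw [Set.ncard_union_eq hd] at hsd
    have e1 : (H.edgeSet \ Hstar.edgeSet).ncard = B.card := by
      rw [hB, card_edgeFinset_ncard, SimpleGraph.edgeSet_sdiff]
    have e2 : (Hstar.edgeSet \ H.edgeSet).ncard = A.card := by
      rw [hA, card_edgeFinset_ncard, SimpleGraph.edgeSet_sdiff]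
    omega
  have hAcard : A.card = t := by omega
  have hBcard : B.card = t := by omega
  refine ⟨hAcard, ?_⟩
  have hndA : ∀ e ∈ A, ¬ e.IsDiag := fun e he =>
    (Hstar \ H).not_isDiag_of_mem_edgeSet (SimpleGraph.mem_edgeFinset.mp he)
  have hndB : ∀ e ∈ B, ¬ e.IsDiag := fun e he =>
    (H \ Hstar).not_isDiag_of_mem_edgeSet (SimpleGraph.mem_edgeFinset.mp he)
  have fibcard : ∀ v, Fintype.card {q : ↥B × Bool // hend B q = v} =
      Fintype.card {p : ↥A × Bool // hend A p = v} := by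
    intro v
    rw [card_hend_fiber B hndB v, card_hend_fiber A hndA v]
    have iA : A.filter (fun e => v ∈ e) = (Hstar \ H).incidenceFinset v :=
      ((Hstar \ H).incidenceFinset_eq_filter v).symm
    have iB : B.filter (fun e => v ∈ e) = (H \ Hstar).incidenceFinset v :=
      ((H \ Hstar).incidenceFinset_eq_filter v).symm
    rw [iA, iB, SimpleGraph.card_incidenceFinset_eq_degree,
      SimpleGraph.card_incidenceFinset_eq_degree, hdSd v]
  have φeq : ∀ v, {q : ↥B × Bool // hend B q = v} ≃ {p : ↥A × Bool // hend A p = v} :=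
    fun v => Classical.choice (Fintype.card_eq.mp (fibcard v))
  set φ := Equiv.ofFiberEquiv φeq with hφdef
  have hφ : ∀ q, hend A (φ q) = hend B q := fun q => Equiv.ofFiberEquiv_map φeq q
  have hcardAB : Fintype.card (↥A × Bool) = 2 * t := by
    rw [Fintype.card_prod, Fintype.card_coe, Fintype.card_bool, hAcard, mul_comm]
  have h : Nonempty ((↥A × Bool) ≃ Fin (2 * t)) := ⟨Fintype.equivFinOfCardEq hcardAB⟩
  set eA := Classical.choice h with heA
  have hu : Fintype.card ↥B = t := by rw [Fintype.card_coe, hBcard]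
  set u := Fintype.equivFinOfCardEq hu with hudef
  set π₀ := (E0 t).symm.trans (((u.symm.prodCongr finTwoEquiv).trans φ).trans eA) with hπ₀
  refine ⟨π₀, fun b w => ?_⟩
  unfold decode
  rw [dif_pos h]
  simp only [← heA]
  have hx : ∀ (i : Fin t) (c : Fin 2),
      hend A (eA.symm ((π₀ * rho t b w) (E0 t (i, c)))) =
      hend B (u.symm (w i),
        finTwoEquiv ((if b i then Equiv.swap (0 : Fin 2) 1 else Equiv.refl (Fin 2)) c)) := by
    intro i c
    rw [Equiv.Perm.mul_apply, rho_apply, hπ₀]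
    simp [Equiv.trans_apply, Equiv.prodCongr_apply, hφ]
  simp only [hx]
  have hfun : ∀ i : Fin t,
      s(hend B (u.symm (w i), finTwoEquiv ((if b i then Equiv.swap (0 : Fin 2) 1 else Equiv.refl (Fin 2)) (0 : Fin 2))),
        hend B (u.symm (w i), finTwoEquiv ((if b i then Equiv.swap (0 : Fin 2) 1 else Equiv.refl (Fin 2)) (1 : Fin 2)))) =
      ((u.symm (w i) : Sym2 (Fin n))) := by
    intro i
    by_cases hb : b i
    · simp only [hb, if_true, Equiv.swap_apply_left, Equiv.swap_apply_right]
      show s(hend B (u.symm (w i), finTwoEquiv 1), hend B (u.symm (w i), finTwoEquiv 0)) = _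
      simp only [finTwoEquiv]
      show s(hend B (u.symm (w i), true), hend B (u.symm (w i), false)) = _
      rw [Sym2.eq_swap]
      show s((u.symm (w i) : Sym2 (Fin n)).inf, (u.symm (w i) : Sym2 (Fin n)).sup) = _
      exact sym2_mk_inf_sup _
    · simp only [hb, if_false, Equiv.refl_apply]
      show s(hend B (u.symm (w i), finTwoEquiv 0), hend B (u.symm (w i), finTwoEquiv 1)) = _
      simp only [finTwoEquiv]
      show s((u.symm (w i) : Sym2 (Fin n)).inf, (u.symm (w i) : Sym2 (Fin n)).sup) = _
      exact sym2_mk_inf_sup _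
  rw [Finset.image_congr (fun i _ => hfun i)]
  have himg : Finset.image (fun i : Fin t => ((u.symm (w i) : Sym2 (Fin n)))) Finset.univ = B := by
    ext x
    simp only [Finset.mem_image, Finset.mem_univ, true_and]
    constructor
    · rintro ⟨i, rfl⟩; exact (u.symm (w i)).2
    · intro hx'; exact ⟨w.symm (u ⟨x, hx'⟩), by simp⟩
  rw [himg]
  have hset : (Hstar.edgeSet \ (↑A : Set (Sym2 (Fin n)))) ∪ (↑B : Set (Sym2 (Fin n))) = H.edgeSet := by
    rw [hA, hB, SimpleGraph.coe_edgeFinset, SimpleGraph.coe_edgeFinset,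
      SimpleGraph.edgeSet_sdiff, SimpleGraph.edgeSet_sdiff]
    ext e
    simp only [Set.mem_union, Set.mem_diff]
    tauto
  rw [hset, SimpleGraph.fromEdgeSet_edgeSet]


lemma dvd_fact (t : ℕ) : 2 ^ t * t.factorial ∣ (2 * t).factorial := by
  cases t with
  | zero => simp
  | succ s =>
    refine ⟨Nat.doubleFactorial (2 * s + 1), ?_⟩
    have h1 : (2 * (s + 1)).factorial =
        Nat.doubleFactorial (2 * (s + 1)) * Nat.doubleFactorial (2 * s + 1) := by
      rw [show 2 * (s + 1) = 2 * s + 1 + 1 by ring]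
      exact Nat.factorial_eq_mul_doubleFactorial (2 * s + 1)
    rw [h1, Nat.doubleFactorial_two_mul]

end Fiber

end Stmt2Aux

open Stmt2Aux Finset Equiv in
theorem stmt2 (k n t : ℕ) (hk : 1 ≤ k) (Hstar : SimpleGraph (Fin n))
    (hreg : ∀ v, (Hstar.neighborSet v).ncard = k) :
    Set.ncard {H : SimpleGraph (Fin n) | (∀ v, (H.neighborSet v).ncard = k) ∧
        (symmDiff H.edgeSet Hstar.edgeSet).ncard = 2 * t} ≤
      Nat.choose (k * n / 2) t * ((2 * t).factorial / (2 ^ t * t.factorial)) := by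
  classical
  set S : Set (SimpleGraph (Fin n)) := {H : SimpleGraph (Fin n) |
    (∀ v, (H.neighborSet v).ncard = k) ∧
    (symmDiff H.edgeSet Hstar.edgeSet).ncard = 2 * t} with hS
  -- number of edges of Hstar
  have hdeg : ∀ v, Hstar.degree v = k := fun v => by
    rw [← SimpleGraph.card_neighborSet_eq_degree, ← Nat.card_eq_fintype_card,
      Nat.card_coe_set_eq, hreg v]
  have hE : Hstar.edgeFinset.card = k * n / 2 := by
    have hsum := SimpleGraph.sum_degrees_eq_twice_card_edges Hstar
    rw [card_edgeFinset_ncard] at hsum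
    rw [Finset.sum_congr rfl (fun v _ => hdeg v), Finset.sum_const, smul_eq_mul,
      Finset.card_univ, Fintype.card_fin, mul_comm n k] at hsum
    rw [card_edgeFinset_ncard]
    omega
  have key : ∀ H : SimpleGraph (Fin n), ∃ π : Equiv.Perm (Fin (2 * t)), H ∈ S →
      ((Hstar \ H).edgeFinset.card = t ∧ ∀ (b : Fin t → Bool) (w : Equiv.Perm (Fin t)),
        decode t Hstar (Hstar \ H).edgeFinset (π * rho t b w) = H) := by
    intro H
    by_cases hH : H ∈ S
    · obtain ⟨hc, π, hs⟩ := decode_spec Hstar H (Hstar \ H).edgeFinset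
        (by rw [SimpleGraph.coe_edgeFinset, SimpleGraph.edgeSet_sdiff]) hreg hH.1 hH.2
      exact ⟨π, fun _ => ⟨hc, hs⟩⟩
    · exact ⟨1, fun h => absurd h hH⟩
  choose π₀ hπ₀ using key
  set f : SimpleGraph (Fin n) × ((Fin t → Bool) × Equiv.Perm (Fin t)) →
      Finset (Sym2 (Fin n)) × Equiv.Perm (Fin (2 * t)) :=
    fun x => ((Hstar \ x.1).edgeFinset, π₀ x.1 * rho t x.2.1 x.2.2) with hf
  have hmaps : ∀ x ∈ S.toFinset ×ˢ (Finset.univ : Finset ((Fin t → Bool) × Equiv.Perm (Fin t))),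
      f x ∈ (Hstar.edgeFinset.powersetCard t) ×ˢ
        (Finset.univ : Finset (Equiv.Perm (Fin (2 * t)))) := by
    intro x hx
    rw [Finset.mem_product] at hx ⊢
    refine ⟨?_, Finset.mem_univ _⟩
    rw [Finset.mem_powersetCard]
    constructor
    · exact SimpleGraph.edgeFinset_mono sdiff_le
    · exact (hπ₀ x.1 (Set.mem_toFinset.mp hx.1)).1
  have hinj : Set.InjOn f ↑(S.toFinset ×ˢ
      (Finset.univ : Finset ((Fin t → Bool) × Equiv.Perm (Fin t)))) := by
    intro x hx y hy hxy
    have hx0 := Finset.mem_product.mp (Finset.mem_coe.mp hx)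
    have hy0 := Finset.mem_product.mp (Finset.mem_coe.mp hy)
    have hx1 : x.1 ∈ S := Set.mem_toFinset.mp hx0.1
    have hy1 : y.1 ∈ S := Set.mem_toFinset.mp hy0.1
    have h1 : (Hstar \ x.1).edgeFinset = (Hstar \ y.1).edgeFinset := congrArg Prod.fst hxy
    have h2 : π₀ x.1 * rho t x.2.1 x.2.2 = π₀ y.1 * rho t y.2.1 y.2.2 := congrArg Prod.snd hxy
    have hx' := (hπ₀ x.1 hx1).2 x.2.1 x.2.2
    have hy' := (hπ₀ y.1 hy1).2 y.2.1 y.2.2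
    have hHxy : x.1 = y.1 := by rw [← hx', ← hy', h1, h2]
    rw [hHxy] at h2
    have hrho : rho t x.2.1 x.2.2 = rho t y.2.1 y.2.2 := mul_left_cancel h2
    have hbw : (x.2.1, x.2.2) = (y.2.1, y.2.2) := rho_injective t hrho
    have : x.2 = y.2 := by
      rw [Prod.mk.injEq] at hbw
      exact Prod.ext hbw.1 hbw.2
    exact Prod.ext hHxy this
  have main := Finset.card_le_card_of_injOn f hmaps hinj
  rw [Finset.card_product, Finset.card_product, Finset.card_univ, Finset.card_univ,
    Finset.card_powersetCard, hE, Fintype.card_prod, Fintype.card_perm, Fintype.card_perm,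
    Fintype.card_fun, Fintype.card_bool, Fintype.card_fin, Fintype.card_fin] at main
  -- main : S.toFinset.card * (2 ^ t * t.factorial) ≤ (k*n/2).choose t * (2*t).factorial
  obtain ⟨m, hm⟩ := dvd_fact t
  rw [Set.ncard_eq_toFinset_card', hm, Nat.mul_div_cancel_left m
    (Nat.mul_pos (pow_pos (by norm_num : (0:ℕ) < 2) t) (Nat.factorial_pos t))]
  rw [hm] at main
  have hN : 0 < 2 ^ t * t.factorial :=
    Nat.mul_pos (pow_pos (by norm_num : (0:ℕ) < 2) t) (Nat.factorial_pos t)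
  calc S.toFinset.card = S.toFinset.card := rfl
    _ ≤ (k * n / 2).choose t * m := by
        have := main
        rw [mul_left_comm] at this
        exact Nat.le_of_mul_le_mul_left (by rw [mul_comm] at this ⊢; linarith [this]) hN
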